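/- Fix n ∈ ℕ, ε ∈ (0, 1/2), and 1 ≤ K ≤ 2^n. Let B be the Bernoulli distribution with parameter p₊ = 1/2 + ε on {0,1}^n, write p₋ = 1/2 − ε, and let m be the smallest integer with ∑_{i=0}^{m} C(n,i) ≥ K. Then the K-th Ky Fan norm of B equals ‖B‖_K = ∑_{i=0}^{m−1} C(n,i) p₊^{n−i} p₋^{i} + (K − ∑_{i=0}^{m−1} C(n,i)) · p₊^{n−m} p₋^{m}, where C(n,i) denotes the binomial coefficient. -/

import Mathlib

open Finset

/-- Hamming weight of a binary string. -/
def hammingWeight {n : ℕ} (x : Fin n → Bool) : ℕ :=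
  (Finset.univ.filter (fun j => x j = true)).card

/-- The Bernoulli distribution with parameter `p₊ = 1/2 + ε` on `{0,1}^n`:
`B(x) = (1/2+ε)^(n−w(x)) (1/2−ε)^(w(x))`. -/
noncomputable def bern (n : ℕ) (ε : ℝ) (x : Fin n → Bool) : ℝ :=
  (1/2 + ε) ^ (n - hammingWeight x) * (1/2 - ε) ^ (hammingWeight x)

/-- The `K`-th Ky Fan norm of `Q` : the sum of the `K` largest values of `Q`
(with multiplicity), i.e. the maximal sum of `Q` over subsets of cardinality `K`. -/
noncomputable def kyFan {Z : Type*} [Fintype Z] (K : ℕ) (Q : Z → ℝ) : ℝ :=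
  sSup ((fun S : Finset Z => ∑ z ∈ S, Q z) '' {S : Finset Z | S.card = K})

lemma wt_le {n : ℕ} (x : Fin n → Bool) : hammingWeight x ≤ n := by
  have := Finset.card_filter_le (Finset.univ : Finset (Fin n)) (fun j => x j = true)
  simpa [hammingWeight] using this

lemma card_wt_eq (n i : ℕ) :
    ((univ : Finset (Fin n → Bool)).filter (fun x => hammingWeight x = i)).card
      = n.choose i := by
  have h : ((univ : Finset (Fin n → Bool)).filter (fun x => hammingWeight x = i)).card
      = (Finset.powersetCard i (univ : Finset (Fin n))).card := by
    refine Finset.card_bij' (fun x _ => univ.filter (fun j => x j = true))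
      (fun s _ => fun j => decide (j ∈ s)) ?_ ?_ ?_ ?_
    · intro x hx
      rw [Finset.mem_powersetCard]
      exact ⟨Finset.filter_subset _ _, (Finset.mem_filter.1 hx).2⟩
    · intro s hs
      rw [Finset.mem_powersetCard] at hs
      simp only [Finset.mem_filter, Finset.mem_univ, true_and]
      show ((univ : Finset (Fin n)).filter (fun j => decide (j ∈ s) = true)).card = i
      have hfs : (univ : Finset (Fin n)).filter (fun j => decide (j ∈ s) = true) = s := by
        ext j; simp
      rw [hfs]; exact hs.2
    · intro x hx
      funext j
      simp
    · intro s hs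
      ext j; simp
  rw [h, Finset.card_powersetCard, Finset.card_univ, Fintype.card_fin]

lemma bern_term_anti {ε : ℝ} (hε0 : 0 < ε) (hε : ε < 1/2) {n a b : ℕ}
    (hab : a ≤ b) (hbn : b ≤ n) :
    (1/2 + ε) ^ (n - b) * (1/2 - ε) ^ b ≤ (1/2 + ε) ^ (n - a) * (1/2 - ε) ^ a := by
  have hp : (0:ℝ) < 1/2 + ε := by linarith
  have hq : (0:ℝ) ≤ 1/2 - ε := by linarith
  have hqp : (1/2 - ε : ℝ) ≤ 1/2 + ε := by linarith
  have h1 : (1/2 - ε:ℝ) ^ b = (1/2 - ε)^a * (1/2 - ε)^(b - a) := by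
    rw [← pow_add]; congr 1; omega
  have h2 : (1/2 - ε:ℝ)^(b-a) ≤ (1/2 + ε)^(b-a) := pow_le_pow_left₀ hq hqp _
  calc (1/2 + ε) ^ (n - b) * (1/2 - ε) ^ b
      = (1/2 + ε) ^ (n-b) * (1/2 - ε)^(b-a) * (1/2-ε)^a := by rw [h1]; ring
    _ ≤ (1/2 + ε) ^ (n-b) * (1/2 + ε)^(b-a) * (1/2-ε)^a := by
        apply mul_le_mul_of_nonneg_right _ (pow_nonneg hq a)
        exact mul_le_mul_of_nonneg_left h2 (le_of_lt (pow_pos hp _))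
    _ = ((1/2 + ε) ^ (n-b) * (1/2 + ε)^(b-a)) * (1/2-ε)^a := by ring
    _ = (1/2 + ε) ^ (n-a) * (1/2-ε)^a := by
        rw [← pow_add, show n-b+(b-a) = n-a from by omega]

/-- exact formula for the K-th Ky Fan norm of the Bernoulli
distribution, where m is the smallest integer with ∑_{i=0}^m C(n,i) ≥ K. -/
theorem kyFan_bernoulli_eq
    (n : ℕ) (ε : ℝ) (hε0 : 0 < ε) (hε : ε < 1/2)
    (K : ℕ) (hK1 : 1 ≤ K) (hK2 : K ≤ 2 ^ n)
    (m : ℕ) (hm : K ≤ ∑ i ∈ Finset.range (m + 1), n.choose i)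
    (hmin : ∀ m' < m, ∑ i ∈ Finset.range (m' + 1), n.choose i < K) :
    kyFan K (bern n ε) =
      (∑ i ∈ Finset.range m,
        (n.choose i : ℝ) * (1/2 + ε) ^ (n - i) * (1/2 - ε) ^ i) +
      ((K : ℝ) - ∑ i ∈ Finset.range m, (n.choose i : ℝ)) *
        ((1/2 + ε) ^ (n - m) * (1/2 - ε) ^ m) := by
  classical
  -- basic facts
  have hmn : m ≤ n := by
    by_contra h
    push_neg at h
    have := hmin n h
    rw [Nat.sum_range_choose] at this
    omega
  have hlt : ∑ i ∈ Finset.range m, n.choose i < K := by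
    cases m with
    | zero => simp; omega
    | succ k => exact hmin k (Nat.lt_succ_self k)
  have hsum : ∑ i ∈ Finset.range (m+1), n.choose i
      = ∑ i ∈ Finset.range m, n.choose i + n.choose m := Finset.sum_range_succ _ _
  set cA : ℕ := ∑ i ∈ Finset.range m, n.choose i with hcA
  set A : Finset (Fin n → Bool) := univ.filter (fun x => hammingWeight x < m) with hA
  set M : Finset (Fin n → Bool) := univ.filter (fun x => hammingWeight x = m) with hM
  have hcardM : M.card = n.choose m := card_wt_eq n m
  have hcardA : A.card = cA := by
    rw [hA, Finset.card_eq_sum_card_fiberwise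
      (f := hammingWeight) (t := Finset.range m)
      (fun x hx => by simpa using (Finset.mem_filter.1 hx).2)]
    apply Finset.sum_congr rfl
    intro i hi
    rw [Finset.filter_filter]
    have hfe : Finset.filter (fun a => hammingWeight a < m ∧ hammingWeight a = i)
        (univ : Finset (Fin n → Bool)) = Finset.filter (fun a => hammingWeight a = i) univ := by
      apply Finset.filter_congr
      intro x _
      simp only [Finset.mem_range] at hi
      constructor
      · exact fun h => h.2
      · intro h; exact ⟨by omega, h⟩
    rw [hfe, card_wt_eq]
  -- pick B₀ ⊆ M
  obtain ⟨B₀, hB₀sub, hB₀card⟩ :=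
    Finset.exists_subset_card_eq (s := M) (n := K - cA) (by rw [hcardM]; omega)
  have hdisj : Disjoint A B₀ := by
    rw [Finset.disjoint_left]
    intro x hx hx'
    have h1 := (Finset.mem_filter.1 hx).2
    have h2 := (Finset.mem_filter.1 (hB₀sub hx')).2
    omega
  set S₀ : Finset (Fin n → Bool) := A ∪ B₀ with hS₀
  have hcardS₀ : S₀.card = K := by
    rw [hS₀, Finset.card_union_of_disjoint hdisj, hcardA, hB₀card]; omega
  set c : ℝ := (1/2 + ε) ^ (n - m) * (1/2 - ε) ^ m with hc
  -- weight bounds on S₀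
  have hwS₀ : ∀ x ∈ S₀, hammingWeight x ≤ m := by
    intro x hx
    rcases Finset.mem_union.1 hx with h | h
    · exact le_of_lt (Finset.mem_filter.1 h).2
    · exact le_of_eq (Finset.mem_filter.1 (hB₀sub h)).2
  -- value of sum over S₀
  have hvalA : ∑ x ∈ A, bern n ε x
      = ∑ i ∈ Finset.range m, (n.choose i : ℝ) * (1/2 + ε) ^ (n - i) * (1/2 - ε) ^ i := by
    rw [← Finset.sum_fiberwise_of_maps_to
      (g := hammingWeight) (t := Finset.range m)
      (fun x hx => by simpa using (Finset.mem_filter.1 hx).2)]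
    apply Finset.sum_congr rfl
    intro i hi
    have hAf : A.filter (fun x => hammingWeight x = i) = univ.filter (fun x => hammingWeight x = i) := by
      rw [hA, Finset.filter_filter]
      apply Finset.filter_congr
      intro x _
      simp only [Finset.mem_range] at hi
      constructor
      · exact fun h => h.2
      · intro h; exact ⟨by omega, h⟩
    rw [hAf]
    rw [Finset.sum_congr rfl (fun x hx =>
      show bern n ε x = (1/2 + ε) ^ (n - i) * (1/2 - ε) ^ i by
        rw [bern, (Finset.mem_filter.1 hx).2])]
    rw [Finset.sum_const, card_wt_eq, nsmul_eq_mul]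
    ring
  have hvalB : ∑ x ∈ B₀, bern n ε x = ((K : ℝ) - (cA : ℝ)) * c := by
    rw [Finset.sum_congr rfl (fun x hx =>
      show bern n ε x = c by
        rw [bern, (Finset.mem_filter.1 (hB₀sub hx)).2, hc])]
    rw [Finset.sum_const, hB₀card, nsmul_eq_mul, Nat.cast_sub (le_of_lt hlt)]
  have hvalS₀ : ∑ x ∈ S₀, bern n ε x
      = (∑ i ∈ Finset.range m,
          (n.choose i : ℝ) * (1/2 + ε) ^ (n - i) * (1/2 - ε) ^ i) +
        ((K : ℝ) - ∑ i ∈ Finset.range m, (n.choose i : ℝ)) * c := by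
    rw [hS₀, Finset.sum_union hdisj, hvalA, hvalB]
    congr 2
    push_cast [hcA]
    ring
  -- the set in the sSup
  set Ω : Set ℝ := ((fun S : Finset (Fin n → Bool) => ∑ z ∈ S, bern n ε z)
      '' {S : Finset (Fin n → Bool) | S.card = K}) with hΩ
  have hmem : (∑ x ∈ S₀, bern n ε x) ∈ Ω := ⟨S₀, hcardS₀, rfl⟩
  have hub : ∀ y ∈ Ω, y ≤ ∑ x ∈ S₀, bern n ε x := by
    rintro y ⟨T, hT, rfl⟩
    replace hT : T.card = K := hT
    have h1 : ∑ x ∈ T ∩ S₀, bern n ε x + ∑ x ∈ T \ S₀, bern n ε x = ∑ x ∈ T, bern n ε x :=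
      Finset.sum_inter_add_sum_sdiff T S₀ _
    have h2 : ∑ x ∈ S₀ ∩ T, bern n ε x + ∑ x ∈ S₀ \ T, bern n ε x = ∑ x ∈ S₀, bern n ε x :=
      Finset.sum_inter_add_sum_sdiff S₀ T _
    have hcards : (T \ S₀).card = (S₀ \ T).card := by
      have e1 := Finset.card_inter_add_card_sdiff T S₀
      have e2 := Finset.card_inter_add_card_sdiff S₀ T
      rw [Finset.inter_comm S₀ T] at e2
      omega
    have hTup : ∑ x ∈ T \ S₀, bern n ε x ≤ (T \ S₀).card • c := by
      apply Finset.sum_le_card_nsmul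
      intro x hx
      have hxS : x ∉ S₀ := (Finset.mem_sdiff.1 hx).2
      have hxA : ¬ hammingWeight x < m := fun h =>
        hxS (Finset.mem_union.2 (Or.inl (Finset.mem_filter.2 ⟨Finset.mem_univ _, h⟩)))
      exact bern_term_anti hε0 hε (not_lt.1 hxA) (wt_le x)
    have hSlo : (S₀ \ T).card • c ≤ ∑ x ∈ S₀ \ T, bern n ε x := by
      apply Finset.card_nsmul_le_sum
      intro x hx
      exact bern_term_anti hε0 hε (hwS₀ x (Finset.mem_sdiff.1 hx).1) hmn
    rw [Finset.inter_comm] at h2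
    rw [hcards] at hTup
    linarith
  have hΩfin : Ω.Finite := Set.Finite.image _ (Set.toFinite _)
  rw [kyFan]
  have : sSup Ω = ∑ x ∈ S₀, bern n ε x :=
    le_antisymm (csSup_le ⟨_, hmem⟩ hub) (le_csSup hΩfin.bddAbove hmem)
  rw [← hΩ, this, hvalS₀]
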